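/- Consider a combinatorial auction whose winner set W has size |W| ≥ 2, and let π be any Pareto-optimal element of its core U (no π' ∈ U satisfies π'_i ≥ π_i for all i with strict inequality for some i). Then ∑_{i∈N} π_i ≥ (1/(|W|−1)) · max_{π'∈U} ∑_{i∈N} π'_i. -/
import Mathlib


/-- The vector `x` sorted in nondecreasing order. -/
noncomputable def sortVec {n : ℕ} (x : Fin n → ℝ) : Fin n → ℝ := x ∘ Tuple.sort x

/-- `x` leximin-dominates `y`. -/
def LexDom {n : ℕ} (x y : Fin n → ℝ) : Prop :=
  ∃ k : Fin n, (∀ j : Fin n, j < k → sortVec x j = sortVec y j) ∧ sortVec y k < sortVec x k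

/-- The core polytope of a coalition value function `w`. -/
def CorePoly {n : ℕ} (w : Finset (Fin n) → ℝ) : Set (Fin n → ℝ) :=
  {π | (∀ i, 0 ≤ π i) ∧ ∀ S : Finset (Fin n), ∑ i ∈ Finset.univ \ S, π i ≤ w Finset.univ - w S}

/-- An allocation to the coalition `S`: pairwise disjoint bundles of items. -/
def IsAlloc {n m : ℕ} (S : Finset (Fin n)) (a : Fin n → Finset (Fin m)) : Prop :=
  ∀ i ∈ S, ∀ j ∈ S, i ≠ j → Disjoint (a i) (a j)

/-- The coalition value: the maximum total value over allocations to `S`. -/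
noncomputable def coalW {n m : ℕ} (v : Fin n → Finset (Fin m) → ℝ) (S : Finset (Fin n)) : ℝ :=
  sSup (Set.image (fun a : Fin n → Finset (Fin m) => ∑ i ∈ S, v i (a i)) {a | IsAlloc S a})

/-- The set of winners: bidders whose removal strictly decreases the optimal welfare. -/
noncomputable def winners {n m : ℕ} (v : Fin n → Finset (Fin m) → ℝ) : Finset (Fin n) :=
  @Finset.filter _ (fun i => coalW v (Finset.univ \ {i}) < coalW v Finset.univ)
    (Classical.decPred _) Finset.univ

open Finset

section Aux

variable {n m : ℕ} (v : Fin n → Finset (Fin m) → ℝ)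

lemma sum_biUnion_le_sum {α β : Type*} [DecidableEq α] [DecidableEq β]
    (s : Finset α) (t : α → Finset β) (f : β → ℝ) (hf : ∀ b, 0 ≤ f b) :
    ∑ x ∈ s.biUnion t, f x ≤ ∑ a ∈ s, ∑ x ∈ t a, f x := by
  induction s using Finset.induction with
  | empty => simp
  | @insert a s ha ih =>
    rw [Finset.biUnion_insert, Finset.sum_insert ha]
    have h1 : ∑ x ∈ t a ∪ s.biUnion t, f x ≤ ∑ x ∈ t a, f x + ∑ x ∈ s.biUnion t, f x := by
      have h2 : ∑ x ∈ t a ∪ s.biUnion t, f x + ∑ x ∈ t a ∩ s.biUnion t, f x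
          = ∑ x ∈ t a, f x + ∑ x ∈ s.biUnion t, f x := Finset.sum_union_inter
      have h3 : (0:ℝ) ≤ ∑ x ∈ t a ∩ s.biUnion t, f x := Finset.sum_nonneg fun x _ => hf x
      linarith
    exact le_trans h1 (by linarith [ih])

lemma alloc_empty (S : Finset (Fin n)) :
    IsAlloc S (fun _ : Fin n => (∅ : Finset (Fin m))) := by
  intro i _ j _ _; simp

lemma coalW_set_ne (S : Finset (Fin n)) :
    (Set.image (fun a : Fin n → Finset (Fin m) => ∑ i ∈ S, v i (a i)) {a | IsAlloc S a}).Nonempty :=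
  ⟨_, ⟨_, alloc_empty S, rfl⟩⟩

lemma coalW_set_bdd (S : Finset (Fin n)) :
    BddAbove (Set.image (fun a : Fin n → Finset (Fin m) => ∑ i ∈ S, v i (a i)) {a | IsAlloc S a}) :=
  ((Set.toFinite {a : Fin n → Finset (Fin m) | IsAlloc S a}).image _).bddAbove

lemma mem_winners_iff (i : Fin n) :
    i ∈ winners v ↔ coalW v (univ \ {i}) < coalW v univ := by
  simp [winners]

lemma coalW_mono (hv0 : ∀ i, v i ∅ = 0) {S T : Finset (Fin n)} (hST : S ⊆ T) :
    coalW v S ≤ coalW v T := by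
  apply csSup_le (coalW_set_ne v S)
  rintro x ⟨a, ha, rfl⟩
  have key : IsAlloc T (fun i => if i ∈ S then a i else (∅ : Finset (Fin m))) := by
    intro i hi j hj hij
    by_cases hiS : i ∈ S <;> by_cases hjS : j ∈ S <;> simp [hiS, hjS]
    exact ha i hiS j hjS hij
  have hsum : ∑ i ∈ S, v i (a i)
      = ∑ i ∈ T, v i (if i ∈ S then a i else (∅ : Finset (Fin m))) := by
    rw [← Finset.sum_sdiff hST]
    have h1 : ∑ i ∈ T \ S, v i (if i ∈ S then a i else (∅ : Finset (Fin m))) = 0 := by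
      apply Finset.sum_eq_zero
      intro i hi
      rw [if_neg (Finset.mem_sdiff.mp hi).2, hv0]
    have h2 : ∑ i ∈ S, v i (if i ∈ S then a i else (∅ : Finset (Fin m))) = ∑ i ∈ S, v i (a i) :=
      Finset.sum_congr rfl fun i hi => by rw [if_pos hi]
    rw [h1, h2, zero_add]
  show ∑ i ∈ S, v i (a i) ≤ coalW v T
  rw [hsum]
  exact le_csSup (coalW_set_bdd v T) ⟨_, key, rfl⟩

lemma nonwinner_zero (hv0 : ∀ i, v i ∅ = 0) {π : Fin n → ℝ}
    (hm : π ∈ CorePoly (coalW v)) {i : Fin n} (hi : i ∉ winners v) : π i = 0 := by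
  have h1 := hm.2 (univ \ {i})
  have h2 : (univ \ (univ \ {i}) : Finset (Fin n)) = {i} := by simp
  rw [h2, Finset.sum_singleton] at h1
  rw [mem_winners_iff] at hi
  have h3 : coalW v univ ≤ coalW v (univ \ {i}) := le_of_not_gt hi
  have h4 : π i ≤ 0 := le_trans h1 (by linarith)
  exact le_antisymm h4 (hm.1 i)

/-- At a Pareto-optimal core point, every coordinate has a tight constraint avoiding it. -/
lemma exists_tight (hv0 : ∀ i, v i ∅ = 0) {π : Fin n → ℝ}
    (hmem : π ∈ CorePoly (coalW v))
    (hPO : ¬ ∃ π' ∈ CorePoly (coalW v), (∀ i, π i ≤ π' i) ∧ ∃ j, π j < π' j)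
    (j : Fin n) :
    ∃ S : Finset (Fin n), j ∉ S ∧ ∑ i ∈ univ \ S, π i = coalW v univ - coalW v S := by
  by_contra hcon
  push_neg at hcon
  classical
  set f : Finset (Fin n) → ℝ :=
    fun S => coalW v univ - coalW v S - ∑ i ∈ univ \ S, π i with hf
  set 𝒮 : Finset (Finset (Fin n)) := Finset.univ.filter (fun S => j ∉ S) with h𝒮
  have hne : 𝒮.Nonempty := ⟨∅, by simp [h𝒮]⟩
  obtain ⟨S₀, hS₀, hmin⟩ := 𝒮.exists_min_image f hne
  have hS₀j : j ∉ S₀ := (Finset.mem_filter.mp hS₀).2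
  have hε : 0 < f S₀ := by
    have h1 := hmem.2 S₀
    have h2 := hcon S₀ hS₀j
    simp only [hf]
    cases lt_or_eq_of_le h1 with
    | inl h => linarith
    | inr h => exact absurd h h2
  apply hPO
  set ε := f S₀
  refine ⟨fun i => if i = j then π i + ε else π i, ⟨?_, ?_⟩, ?_, ⟨j, ?_⟩⟩
  · intro i
    by_cases hij : i = j
    · simp only [if_pos hij]; have := hmem.1 i; linarith
    · simp only [if_neg hij]; exact hmem.1 i
  · intro S
    have hsplit : ∑ i ∈ univ \ S, (if i = j then π i + ε else π i)
        = ∑ i ∈ univ \ S, π i + (if j ∈ univ \ S then ε else 0) := by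
      have : ∀ i, (if i = j then π i + ε else π i) = π i + (if i = j then ε else 0) := by
        intro i; by_cases hij : i = j <;> simp [hij]
      simp only [this, Finset.sum_add_distrib]
      congr 1
      exact Finset.sum_ite_eq' _ j (fun _ => ε)
    rw [hsplit]
    by_cases hjS : j ∈ S
    · rw [if_neg (by simp [hjS]), add_zero]
      exact hmem.2 S
    · rw [if_pos (by simp [hjS])]
      have hSmem : S ∈ 𝒮 := by simp [h𝒮, hjS]
      have := hmin S hSmem
      simp only [hf] at this ⊢
      linarith
  · intro i
    by_cases hij : i = j
    · simp only [if_pos hij]; linarith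
    · simp only [if_neg hij]; exact le_refl _
  · have heq : (if j = j then π j + ε else π j) = π j + ε := if_pos rfl
    show π j < if j = j then π j + ε else π j
    rw [heq]; linarith

/-- Main bound: any core point's total is at most `(|W|-1)` times a Pareto-optimal total. -/
lemma core_total_bound (hv0 : ∀ i, v i ∅ = 0)
    (hW : 2 ≤ (winners v).card)
    {π : Fin n → ℝ} (hmem : π ∈ CorePoly (coalW v))
    (hPO : ¬ ∃ π' ∈ CorePoly (coalW v), (∀ i, π i ≤ π' i) ∧ ∃ j, π j < π' j)
    {π' : Fin n → ℝ} (hmem' : π' ∈ CorePoly (coalW v)) :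
    ∑ i, π' i ≤ (((winners v).card : ℝ) - 1) * ∑ i, π i := by
  classical
  set W := winners v with hWdef
  -- choose tight sets
  have hT : ∀ j : Fin n, ∃ S : Finset (Fin n),
      j ∉ S ∧ ∑ i ∈ univ \ S, π i = coalW v univ - coalW v S :=
    exists_tight v hv0 hmem hPO
  choose T hTj hTtight using hT
  set V : Fin n → Finset (Fin n) := fun j => W \ T j with hV
  have hjV : ∀ j ∈ W, j ∈ V j := fun j hj => Finset.mem_sdiff.mpr ⟨hj, hTj j⟩
  -- reduce sums to winners
  have hsumW : ∀ ρ : Fin n → ℝ, ρ ∈ CorePoly (coalW v) → ∑ i ∈ W, ρ i = ∑ i, ρ i := by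
    intro ρ hρ
    exact Finset.sum_subset (Finset.subset_univ W)
      (fun x _ hx => nonwinner_zero v hv0 hρ hx)
  -- key per-winner inequality
  have hkey : ∀ j : Fin n, ∑ k ∈ V j, π' k ≤ ∑ k ∈ V j, π k := by
    intro j
    have h1 : ∑ k ∈ V j, π' k ≤ coalW v univ - coalW v (univ \ V j) := by
      have := hmem'.2 (univ \ V j)
      rwa [show (univ \ (univ \ V j) : Finset (Fin n)) = V j by simp] at this
    have h2 : coalW v (T j) ≤ coalW v (univ \ V j) := by
      apply coalW_mono v hv0
      intro x hx
      rw [Finset.mem_sdiff]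
      exact ⟨Finset.mem_univ x, fun hxV => (Finset.mem_sdiff.mp hxV).2 hx⟩
    have h3 : ∑ i ∈ univ \ T j, π i = ∑ k ∈ V j, π k := by
      symm
      apply Finset.sum_subset
      · intro x hx
        rw [Finset.mem_sdiff] at hx ⊢
        exact ⟨Finset.mem_univ x, hx.2⟩
      · intro x hx hxV
        rw [Finset.mem_sdiff] at hx hxV
        push_neg at hxV
        exact nonwinner_zero v hv0 hmem (fun hxW => hx.2 (hxV hxW))
    have h4 := hTtight j
    linarith
  -- covering argument
  have hnn' : ∀ i, 0 ≤ π' i := hmem'.1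
  have hnn : ∀ i, 0 ≤ π i := hmem.1
  have hsumnn : (0:ℝ) ≤ ∑ i, π i := Finset.sum_nonneg fun i _ => hnn i
  have hcard1 : (1:ℝ) ≤ ((W.card : ℝ) - 1) := by
    have : (2:ℝ) ≤ (W.card : ℝ) := by exact_mod_cast hW
    linarith
  by_cases hcase : ∃ j ∈ W, ∃ k ∈ V j, k ≠ j
  · obtain ⟨j, hjW, k, hkV, hkj⟩ := hcase
    have hkW : k ∈ W := (Finset.mem_sdiff.mp hkV).1
    set J := W.erase k with hJ
    have hcover : W ⊆ J.biUnion V := by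
      intro x hx
      rw [Finset.mem_biUnion]
      by_cases hxk : x = k
      · exact ⟨j, Finset.mem_erase.mpr ⟨Ne.symm hkj, hjW⟩, hxk ▸ hkV⟩
      · exact ⟨x, Finset.mem_erase.mpr ⟨hxk, hx⟩, hjV x hx⟩
    have hbi : ∑ x ∈ J.biUnion V, π' x ≤ ∑ j' ∈ J, ∑ x ∈ V j', π' x := by
      exact sum_biUnion_le_sum J V π' hnn'
    calc ∑ i, π' i = ∑ i ∈ W, π' i := (hsumW π' hmem').symm
      _ ≤ ∑ x ∈ J.biUnion V, π' x :=
          Finset.sum_le_sum_of_subset_of_nonneg hcover (fun x _ _ => hnn' x)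
      _ ≤ ∑ j' ∈ J, ∑ x ∈ V j', π' x := hbi
      _ ≤ ∑ j' ∈ J, ∑ x ∈ V j', π x := Finset.sum_le_sum fun j' _ => hkey j'
      _ ≤ ∑ j' ∈ J, ∑ x, π x := Finset.sum_le_sum fun j' _ =>
          Finset.sum_le_sum_of_subset_of_nonneg (Finset.subset_univ _) (fun x _ _ => hnn x)
      _ = (J.card : ℝ) * ∑ x, π x := by rw [Finset.sum_const, nsmul_eq_mul]
      _ = ((W.card : ℝ) - 1) * ∑ x, π x := by
          rw [hJ, Finset.card_erase_of_mem hkW]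
          congr 1
          have h1 : 1 ≤ W.card := le_trans (by norm_num) hW
          push_cast [Nat.cast_sub h1]
          ring
  · push_neg at hcase
    have hle : ∀ j ∈ W, π' j ≤ π j := by
      intro j hjW
      have hVj : V j = {j} := by
        apply Finset.eq_singleton_iff_unique_mem.mpr
        exact ⟨hjV j hjW, fun x hx => hcase j hjW x hx⟩
      have := hkey j
      rwa [hVj, Finset.sum_singleton, Finset.sum_singleton] at this
    calc ∑ i, π' i = ∑ i ∈ W, π' i := (hsumW π' hmem').symm
      _ ≤ ∑ i ∈ W, π i := Finset.sum_le_sum hle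
      _ ≤ ∑ i, π i :=
          Finset.sum_le_sum_of_subset_of_nonneg (Finset.subset_univ _) (fun x _ _ => hnn x)
      _ ≤ ((W.card : ℝ) - 1) * ∑ i, π i := le_mul_of_one_le_left hsumnn hcard1

end Aux

/-- Any Pareto-optimal core outcome attains at least a 1/(|W|-1) fraction of the maximum
total utility over the core. -/
theorem pareto_total_utility_bound (n m : ℕ) (v : Fin n → Finset (Fin m) → ℝ)
    (hv0 : ∀ i, v i ∅ = 0) (hvnn : ∀ i S, 0 ≤ v i S)
    (hW : 2 ≤ (winners v).card)
    (π : Fin n → ℝ) (hmem : π ∈ CorePoly (coalW v))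
    (hPO : ¬ ∃ π' ∈ CorePoly (coalW v), (∀ i, π i ≤ π' i) ∧ ∃ j, π j < π' j) :
    (1 / (((winners v).card : ℝ) - 1)) *
        sSup (Set.image (fun π' : Fin n → ℝ => ∑ i, π' i) (CorePoly (coalW v))) ≤ ∑ i, π i := by
  have hcard1 : (1:ℝ) ≤ ((winners v).card : ℝ) - 1 := by
    have : (2:ℝ) ≤ ((winners v).card : ℝ) := by exact_mod_cast hW
    linarith
  have hpos : (0:ℝ) < ((winners v).card : ℝ) - 1 := lt_of_lt_of_le one_pos hcard1
  have hSup : sSup (Set.image (fun π' : Fin n → ℝ => ∑ i, π' i) (CorePoly (coalW v)))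
      ≤ (((winners v).card : ℝ) - 1) * ∑ i, π i := by
    refine csSup_le ⟨∑ i, π i, ⟨π, hmem, rfl⟩⟩ ?_
    rintro x ⟨π', hπ', rfl⟩
    exact core_total_bound v hv0 hW hmem hPO hπ'
  rw [one_div_mul_eq_div, div_le_iff₀ hpos]
  linarith [hSup]
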